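/- Let G = (V, E) be a finite simple graph, let x* be an LP-optimal half-integral point of the vertex-cover LP of G with LP value OPT, and let v ∈ V be a vertex such that every LP-optimal point x satisfies 0 < x_v < 1. Then the point y defined by y_v = 1 and y_u = x*_u for u ≠ v is LP-feasible, has minimal LP value among all LP-feasible points x with x_v = 1, and its LP value equals OPT + 1/2. -/

import Mathlib

def LPFeasible {V : Type*} [Fintype V] (G : SimpleGraph V) (x : V → ℝ) : Prop :=
  (∀ v, 0 ≤ x v ∧ x v ≤ 1) ∧ ∀ u v, G.Adj u v → 1 ≤ x u + x v

noncomputable def LPValue {V : Type*} [Fintype V] (x : V → ℝ) : ℝ := ∑ v, x v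

def LPOptimal {V : Type*} [Fintype V] (G : SimpleGraph V) (x : V → ℝ) : Prop :=
  LPFeasible G x ∧ ∀ y : V → ℝ, LPFeasible G y → LPValue x ≤ LPValue y

def HalfIntegral {V : Type*} (x : V → ℝ) : Prop :=
  ∀ v, x v = 0 ∨ x v = 1/2 ∨ x v = 1

def IsVertexCover {V : Type*} [Fintype V] (G : SimpleGraph V) (C : Finset V) : Prop :=
  ∀ u v, G.Adj u v → u ∈ C ∨ v ∈ C

/-- Setting x_v := 1 in an LP-optimal half-integral point (v fractional in every optimal
solution) yields an optimal solution of the child node with value OPT + 1/2. -/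
lemma card_ite_sum {V : Type*} [Fintype V] [DecidableEq V] (C : Finset V) :
    ∑ u : V, (if u ∈ C then (1:ℝ) else 0) = C.card := by
  simp

lemma step_lemma {V : Type*} [Fintype V] (G : SimpleGraph V) (x : V → ℝ)
    (hx : LPFeasible G x)
    (hne : {u | ¬(x u = 0 ∨ x u = 1/2 ∨ x u = 1)}.Nonempty) :
    ∃ x' : V → ℝ, LPFeasible G x' ∧ LPValue x' ≤ LPValue x ∧
      (∀ u, (x u = 0 ∨ x u = 1/2 ∨ x u = 1) → x' u = x u) ∧
      {u | ¬(x' u = 0 ∨ x' u = 1/2 ∨ x' u = 1)} ⊂ {u | ¬(x u = 0 ∨ x u = 1/2 ∨ x u = 1)} := by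
  classical
  set p : V → Prop := fun u => ¬(x u = 0 ∨ x u = 1/2 ∨ x u = 1) with hp
  set F : Finset V := Finset.univ.filter p with hFdef
  have hmemF : ∀ u, u ∈ F ↔ p u := by
    intro u; simp [hFdef]
  have hFne : F.Nonempty := by
    obtain ⟨u, hu⟩ := hne
    exact ⟨u, (hmemF u).mpr hu⟩
  set A : Finset V := F.filter (fun u => 1/2 < x u) with hA
  set B : Finset V := F.filter (fun u => x u < 1/2) with hB
  have hbd : ∀ u, 0 ≤ x u ∧ x u ≤ 1 := hx.1
  have hFprop : ∀ u ∈ F, x u ≠ 0 ∧ x u ≠ 1/2 ∧ x u ≠ 1 := by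
    intro u hu
    have := (hmemF u).mp hu
    change ¬(x u = 0 ∨ x u = 1/2 ∨ x u = 1) at this
    push_neg at this
    exact this
  have hAmem : ∀ u ∈ A, 1/2 < x u ∧ x u < 1 := by
    intro u hu
    obtain ⟨huF, hlt⟩ := Finset.mem_filter.mp hu
    exact ⟨hlt, lt_of_le_of_ne (hbd u).2 (hFprop u huF).2.2⟩
  have hBmem : ∀ u ∈ B, 0 < x u ∧ x u < 1/2 := by
    intro u hu
    obtain ⟨huF, hlt⟩ := Finset.mem_filter.mp hu
    exact ⟨lt_of_le_of_ne (hbd u).1 (Ne.symm (hFprop u huF).1), hlt⟩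
  have hABF : ∀ u ∈ F, u ∈ A ∨ u ∈ B := by
    intro u hu
    rcases lt_or_gt_of_ne (hFprop u hu).2.1 with h | h
    · exact Or.inr (Finset.mem_filter.mpr ⟨hu, h⟩)
    · exact Or.inl (Finset.mem_filter.mpr ⟨hu, h⟩)
  have hAF : ∀ u ∈ A, u ∈ F := fun u hu => (Finset.mem_filter.mp hu).1
  have hBF : ∀ u ∈ B, u ∈ F := fun u hu => (Finset.mem_filter.mp hu).1
  have hdisj : ∀ u, u ∈ A → u ∉ B := by
    intro u huA huB
    exact absurd ((hAmem u huA).1.trans (hBmem u huB).2) (lt_irrefl _)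
  rcases le_total (B.card) (A.card) with hc | hc
  · -- move toward 1/2
    obtain ⟨u0, hu0F, hmin⟩ := F.exists_min_image (fun u => |x u - 1/2|) hFne
    set ε : ℝ := |x u0 - 1/2| with hε
    have hε0 : 0 < ε := abs_pos.mpr (sub_ne_zero.mpr (hFprop u0 hu0F).2.1)
    have heA : ∀ u ∈ A, ε ≤ x u - 1/2 := by
      intro u hu
      have := hmin u (hAF u hu)
      rwa [abs_of_pos (by linarith [(hAmem u hu).1])] at this
    have heB : ∀ u ∈ B, ε ≤ 1/2 - x u := by
      intro u hu
      have := hmin u (hBF u hu)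
      rwa [abs_of_neg (by linarith [(hBmem u hu).2]), neg_sub] at this
    set x' : V → ℝ := fun u => if u ∈ A then x u - ε else if u ∈ B then x u + ε else x u with hx'
    have hxA : ∀ u ∈ A, x' u = x u - ε := by intro u hu; simp [hx', hu]
    have hxB : ∀ u ∈ B, x' u = x u + ε := by
      intro u hu
      have : u ∉ A := fun h => hdisj u h hu
      simp [hx', this, hu]
    have hxN : ∀ u, u ∉ F → x' u = x u := by
      intro u hu
      have h1 : u ∉ A := fun h => hu (hAF u h)
      have h2 : u ∉ B := fun h => hu (hBF u h)
      simp [hx', h1, h2]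
    have hlowA : ∀ u ∈ A, 1/2 ≤ x' u := by
      intro u hu; rw [hxA u hu]; linarith [heA u hu]
    have hgeNA : ∀ u, u ∉ A → x u ≤ x' u := by
      intro u hu
      by_cases hb : u ∈ B
      · rw [hxB u hb]; linarith
      · by_cases hf : u ∈ F
        · rcases hABF u hf with h | h
          · exact absurd h hu
          · exact absurd h hb
        · rw [hxN u hf]
    have hfeas : LPFeasible G x' := by
      constructor
      · intro u
        by_cases ha : u ∈ A
        · rw [hxA u ha]; constructor <;> linarith [(hAmem u ha).2, heA u ha, hε0]
        · by_cases hb : u ∈ B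
          · rw [hxB u hb]; constructor <;> linarith [(hBmem u hb).1, heB u hb, hε0]
          · have hf : u ∉ F := by
              intro hf; rcases hABF u hf with h | h; exacts [ha h, hb h]
            rw [hxN u hf]; exact hbd u
      · intro u w hadj
        have h1 := hx.2 u w hadj
        by_cases ha : u ∈ A
        · by_cases hwa : w ∈ A
          · linarith [hlowA u ha, hlowA w hwa]
          · by_cases hwb : w ∈ B
            · rw [hxA u ha, hxB w hwb]; linarith
            · have hwf : w ∉ F := by
                intro hf; rcases hABF w hf with h | h; exacts [hwa h, hwb h]
              rw [hxN w hwf]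
              have hw : x w = 0 ∨ x w = 1/2 ∨ x w = 1 := by
                by_contra hc'; exact hwf ((hmemF w).mpr hc')
              rcases hw with h | h | h
              · exfalso; linarith [(hAmem u ha).2]
              · linarith [hlowA u ha]
              · linarith [hlowA u ha]
        · by_cases hwa : w ∈ A
          · by_cases hub : u ∈ B
            · rw [hxA w hwa, hxB u hub]; linarith
            · have huf : u ∉ F := by
                intro hf; rcases hABF u hf with h | h; exacts [ha h, hub h]
              rw [hxN u huf]
              have hu : x u = 0 ∨ x u = 1/2 ∨ x u = 1 := by
                by_contra hc'; exact huf ((hmemF u).mpr hc')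
              rcases hu with h | h | h
              · exfalso; linarith [(hAmem w hwa).2]
              · linarith [hlowA w hwa]
              · linarith [hlowA w hwa]
          · linarith [hgeNA u ha, hgeNA w hwa]
    have hval : LPValue x' ≤ LPValue x := by
      have hx'eq : ∀ u, x' u = x u + ε * ((if u ∈ B then (1:ℝ) else 0) - (if u ∈ A then 1 else 0)) := by
        intro u
        by_cases ha : u ∈ A
        · have hb : u ∉ B := hdisj u ha
          simp [hx', ha, hb]; try ring
        · by_cases hb : u ∈ B
          · simp [hx', ha, hb]; try ring
          · simp [hx', ha, hb]
      have h2 : LPValue x' = LPValue x + ε * ((B.card : ℝ) - A.card) := by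
        unfold LPValue
        rw [Finset.sum_congr rfl (fun u _ => hx'eq u), Finset.sum_add_distrib, ← Finset.mul_sum,
          Finset.sum_sub_distrib, card_ite_sum, card_ite_sum]
      rw [h2]
      have : (B.card : ℝ) ≤ A.card := Nat.cast_le.mpr hc
      nlinarith
    have hagree : ∀ u, (x u = 0 ∨ x u = 1/2 ∨ x u = 1) → x' u = x u := by
      intro u hu
      exact hxN u (fun hf => (hmemF u).mp hf hu)
    have hu0half : x' u0 = 1/2 := by
      rcases hABF u0 hu0F with h | h
      · rw [hxA u0 h]
        have : ε = x u0 - 1/2 := abs_of_pos (by linarith [(hAmem u0 h).1])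
        linarith
      · rw [hxB u0 h]
        have : ε = 1/2 - x u0 := by
          rw [hε, abs_of_neg (by linarith [(hBmem u0 h).2]), neg_sub]
        linarith
    refine ⟨x', hfeas, hval, hagree, ?_⟩
    constructor
    · intro u hu
      by_contra hxu
      simp only [Set.mem_setOf_eq] at hu hxu
      exact hu (by rw [hagree u (by tauto)]; tauto)
    · intro hsub
      have hu0 : u0 ∈ {u | ¬(x u = 0 ∨ x u = 1/2 ∨ x u = 1)} := (hmemF u0).mp hu0F
      have := hsub hu0
      simp only [Set.mem_setOf_eq] at this
      exact this (Or.inr (Or.inl hu0half))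
  · -- move away from 1/2
    obtain ⟨u0, hu0F, hmin⟩ := F.exists_min_image (fun u => min (x u) (1 - x u)) hFne
    set ε : ℝ := min (x u0) (1 - x u0) with hε
    have hu0bd := hFprop u0 hu0F
    have hε0 : 0 < ε := by
      apply lt_min
      · exact lt_of_le_of_ne (hbd u0).1 (Ne.symm hu0bd.1)
      · have := lt_of_le_of_ne (hbd u0).2 hu0bd.2.2; linarith
    have heA : ∀ u ∈ A, ε ≤ 1 - x u := by
      intro u hu
      exact (hmin u (hAF u hu)).trans (min_le_right _ _)
    have heB : ∀ u ∈ B, ε ≤ x u := by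
      intro u hu
      exact (hmin u (hBF u hu)).trans (min_le_left _ _)
    set x' : V → ℝ := fun u => if u ∈ A then x u + ε else if u ∈ B then x u - ε else x u with hx'
    have hxA : ∀ u ∈ A, x' u = x u + ε := by intro u hu; simp [hx', hu]
    have hxB : ∀ u ∈ B, x' u = x u - ε := by
      intro u hu
      have : u ∉ A := fun h => hdisj u h hu
      simp [hx', this, hu]
    have hxN : ∀ u, u ∉ F → x' u = x u := by
      intro u hu
      have h1 : u ∉ A := fun h => hu (hAF u h)
      have h2 : u ∉ B := fun h => hu (hBF u h)
      simp [hx', h1, h2]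
    have hgeNB : ∀ u, u ∉ B → x u ≤ x' u := by
      intro u hu
      by_cases ha : u ∈ A
      · rw [hxA u ha]; linarith
      · by_cases hf : u ∈ F
        · rcases hABF u hf with h | h
          · exact absurd h ha
          · exact absurd h hu
        · rw [hxN u hf]
    have hfeas : LPFeasible G x' := by
      constructor
      · intro u
        by_cases ha : u ∈ A
        · rw [hxA u ha]; constructor <;> linarith [(hAmem u ha).1, heA u ha, hε0]
        · by_cases hb : u ∈ B
          · rw [hxB u hb]; constructor <;> linarith [(hBmem u hb).2, heB u hb, hε0]
          · have hf : u ∉ F := by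
              intro hf; rcases hABF u hf with h | h; exacts [ha h, hb h]
            rw [hxN u hf]; exact hbd u
      · intro u w hadj
        have h1 := hx.2 u w hadj
        by_cases hb : u ∈ B
        · by_cases hwb : w ∈ B
          · exfalso; linarith [(hBmem u hb).2, (hBmem w hwb).2]
          · by_cases hwa : w ∈ A
            · rw [hxB u hb, hxA w hwa]; linarith
            · have hwf : w ∉ F := by
                intro hf; rcases hABF w hf with h | h; exacts [hwa h, hwb h]
              rw [hxN w hwf, hxB u hb]
              have hw : x w = 0 ∨ x w = 1/2 ∨ x w = 1 := by
                by_contra hc'; exact hwf ((hmemF w).mpr hc')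
              have hub := (hBmem u hb).2
              rcases hw with h | h | h
              · exfalso; linarith
              · exfalso; linarith
              · linarith [heB u hb]
        · by_cases hwb : w ∈ B
          · by_cases hua : u ∈ A
            · rw [hxB w hwb, hxA u hua]; linarith
            · have huf : u ∉ F := by
                intro hf; rcases hABF u hf with h | h; exacts [hua h, hb h]
              rw [hxN u huf, hxB w hwb]
              have hu : x u = 0 ∨ x u = 1/2 ∨ x u = 1 := by
                by_contra hc'; exact huf ((hmemF u).mpr hc')
              have hwbb := (hBmem w hwb).2
              rcases hu with h | h | h
              · exfalso; linarith
              · exfalso; linarith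
              · linarith [heB w hwb]
          · linarith [hgeNB u hb, hgeNB w hwb]
    have hval : LPValue x' ≤ LPValue x := by
      have hx'eq : ∀ u, x' u = x u + ε * ((if u ∈ A then (1:ℝ) else 0) - (if u ∈ B then 1 else 0)) := by
        intro u
        by_cases ha : u ∈ A
        · have hb : u ∉ B := hdisj u ha
          simp [hx', ha, hb]; try ring
        · by_cases hb : u ∈ B
          · simp [hx', ha, hb]; try ring
          · simp [hx', ha, hb]
      have h2 : LPValue x' = LPValue x + ε * ((A.card : ℝ) - B.card) := by
        unfold LPValue
        rw [Finset.sum_congr rfl (fun u _ => hx'eq u), Finset.sum_add_distrib, ← Finset.mul_sum,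
          Finset.sum_sub_distrib, card_ite_sum, card_ite_sum]
      rw [h2]
      have : (A.card : ℝ) ≤ B.card := Nat.cast_le.mpr hc
      nlinarith
    have hagree : ∀ u, (x u = 0 ∨ x u = 1/2 ∨ x u = 1) → x' u = x u := by
      intro u hu
      exact hxN u (fun hf => (hmemF u).mp hf hu)
    have hu0half : x' u0 = 0 ∨ x' u0 = 1 := by
      rcases hABF u0 hu0F with h | h
      · right
        rw [hxA u0 h]
        have hm : ε = 1 - x u0 := by
          rw [hε, min_eq_right]; linarith [(hAmem u0 h).1]
        linarith
      · left
        rw [hxB u0 h]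
        have hm : ε = x u0 := by
          rw [hε, min_eq_left]; linarith [(hBmem u0 h).2]
        linarith
    refine ⟨x', hfeas, hval, hagree, ?_⟩
    constructor
    · intro u hu
      by_contra hxu
      simp only [Set.mem_setOf_eq] at hu hxu
      exact hu (by rw [hagree u (by tauto)]; tauto)
    · intro hsub
      have hu0 : u0 ∈ {u | ¬(x u = 0 ∨ x u = 1/2 ∨ x u = 1)} := (hmemF u0).mp hu0F
      have := hsub hu0
      simp only [Set.mem_setOf_eq] at this
      rcases hu0half with h | h
      · exact this (Or.inl h)
      · exact this (Or.inr (Or.inr h))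

lemma halfify {V : Type*} [Fintype V] (G : SimpleGraph V) (x : V → ℝ) (hx : LPFeasible G x) :
    ∃ z : V → ℝ, LPFeasible G z ∧ HalfIntegral z ∧ LPValue z ≤ LPValue x ∧
      ∀ u, (x u = 0 ∨ x u = 1/2 ∨ x u = 1) → z u = x u := by
  classical
  suffices H : ∀ n (x : V → ℝ), LPFeasible G x →
      {u | ¬(x u = 0 ∨ x u = 1/2 ∨ x u = 1)}.ncard ≤ n →
      ∃ z : V → ℝ, LPFeasible G z ∧ HalfIntegral z ∧ LPValue z ≤ LPValue x ∧
        ∀ u, (x u = 0 ∨ x u = 1/2 ∨ x u = 1) → z u = x u by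
    exact H _ x hx le_rfl
  intro n
  induction n with
  | zero =>
    intro x hx hc
    have hemp : {u | ¬(x u = 0 ∨ x u = 1/2 ∨ x u = 1)} = ∅ := by
      rw [← Set.ncard_eq_zero (Set.toFinite _)]
      omega
    refine ⟨x, hx, ?_, le_rfl, fun u _ => rfl⟩
    intro u
    by_contra h
    rw [Set.eq_empty_iff_forall_notMem] at hemp
    exact hemp u h
  | succ n ih =>
    intro x hx hc
    by_cases hemp : {u | ¬(x u = 0 ∨ x u = 1/2 ∨ x u = 1)} = ∅
    · refine ⟨x, hx, ?_, le_rfl, fun u _ => rfl⟩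
      intro u
      by_contra h
      rw [Set.eq_empty_iff_forall_notMem] at hemp
      exact hemp u h
    · obtain ⟨x', hf', hv', hag', hss'⟩ :=
        step_lemma G x hx (Set.nonempty_iff_ne_empty.mpr hemp)
      have hcard : {u | ¬(x' u = 0 ∨ x' u = 1/2 ∨ x' u = 1)}.ncard ≤ n := by
        have := Set.ncard_lt_ncard hss' (Set.toFinite _)
        omega
      obtain ⟨z, hzf, hzh, hzv, hzag⟩ := ih x' hf' hcard
      refine ⟨z, hzf, hzh, hzv.trans hv', ?_⟩
      intro u hu
      rw [hzag u (by rw [hag' u hu]; exact hu), hag' u hu]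

lemma halfint_val {V : Type*} [Fintype V] (w : V → ℝ) (h : HalfIntegral w) :
    ∃ k : ℤ, LPValue w = (k : ℝ) / 2 := by
  classical
  refine ⟨∑ u, (if w u = 0 then 0 else if w u = 1/2 then 1 else 2), ?_⟩
  rw [LPValue]
  push_cast
  rw [Finset.sum_div]
  refine Finset.sum_congr rfl fun u _ => ?_
  rcases h u with h0 | h0 | h0 <;> rw [h0] <;> norm_num


theorem branch_one_value {V : Type*} [Fintype V] [DecidableEq V] (G : SimpleGraph V)
    (xstar : V → ℝ) (OPT : ℝ) (hx : LPOptimal G xstar) (hxh : HalfIntegral xstar)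
    (hOPT : LPValue xstar = OPT)
    (v : V) (hv : ∀ x : V → ℝ, LPOptimal G x → 0 < x v ∧ x v < 1) :
    LPFeasible G (Function.update xstar v 1) ∧
    (∀ x : V → ℝ, LPFeasible G x → x v = 1 →
      LPValue (Function.update xstar v 1) ≤ LPValue x) ∧
    LPValue (Function.update xstar v 1) = OPT + 1/2 := by
  classical
  have hv2 := hv xstar hx
  have hxv : xstar v = 1/2 := by
    rcases hxh v with h | h | h
    · exfalso; rw [h] at hv2; exact lt_irrefl _ hv2.1
    · exact h
    · exfalso; rw [h] at hv2; exact lt_irrefl _ hv2.2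
  have hyle : ∀ u, xstar u ≤ Function.update xstar v 1 u := by
    intro u
    rcases eq_or_ne u v with rfl | hne
    · rw [Function.update_self]; exact (hx.1.1 u).2
    · rw [Function.update_of_ne hne]
  have hyfeas : LPFeasible G (Function.update xstar v 1) := by
    constructor
    · intro u
      rcases eq_or_ne u v with rfl | hne
      · rw [Function.update_self]; norm_num
      · rw [Function.update_of_ne hne]; exact hx.1.1 u
    · intro u w hadj
      exact le_trans (hx.1.2 u w hadj) (add_le_add (hyle u) (hyle w))
  have hyval : LPValue (Function.update xstar v 1) = OPT + 1/2 := by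
    rw [LPValue, Finset.sum_update_of_mem (Finset.mem_univ v)]
    have h2 := Finset.sum_erase_add Finset.univ xstar (Finset.mem_univ v)
    rw [Finset.erase_eq] at h2
    rw [LPValue] at hOPT
    linarith [h2, hxv]
  refine ⟨hyfeas, ?_, hyval⟩
  intro x hxf hxv1
  rw [hyval]
  obtain ⟨z, hzf, hzh, hzval, hzag⟩ := halfify G x hxf
  have hz1 : z v = 1 := by rw [hzag v (Or.inr (Or.inr hxv1))]; exact hxv1
  have hOPTle : LPValue xstar ≤ LPValue z := hx.2 z hzf
  have hne : LPValue xstar ≠ LPValue z := by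
    intro h
    have hopt : LPOptimal G z := ⟨hzf, fun w hw => h ▸ hx.2 w hw⟩
    have := (hv z hopt).2
    rw [hz1] at this
    exact lt_irrefl _ this
  obtain ⟨k, hk⟩ := halfint_val z hzh
  obtain ⟨m, hm⟩ := halfint_val xstar hxh
  have hmk : m < k := by
    have : (m : ℝ) / 2 < (k : ℝ) / 2 := by
      rw [← hk, ← hm]
      exact lt_of_le_of_ne hOPTle hne
    exact_mod_cast (by linarith : (m:ℝ) < k)
  have : (m : ℝ) + 1 ≤ k := by exact_mod_cast hmk
  have hfin : OPT + 1/2 ≤ LPValue z := by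
    rw [hk, ← hOPT, hm]
    linarith
  linarith
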